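/- arXiv:2508.05945 — 9 statements merged into one kernel-verified Lean document; each statement's English description precedes it below -/
import Mathlib

section
/- Let s₁ : [0,1] → [s₁(1), ∞] and s₂ : [0,1] → [s₂(1), ∞] be continuous, strictly decreasing bijections with s₁(0) = s₂(0) = ∞, and define Sᵢ(x,y) = sᵢ⁻¹(min(sᵢ(x) + sᵢ(y), sᵢ(0))) using the pseudo-inverse (sᵢ⁻¹(u) = 1 for u ≤ sᵢ(1)). Then S₁(x,y) ≤ S₂(x,y) for all x,y ∈ [0,1] if and only if the function h = s₁ ∘ s₂⁻¹ : [s₂(1), ∞] → [s₁(1), ∞] is subadditive, i.e., h(u+v) ≤ h(u) + h(v) for all u,v in [s₂(1), ∞]. -/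
open Set ENNReal

/-- For continuous cancellative t-subnorms `S₁, S₂` generated by
continuous strictly decreasing additive generators `s₁, s₂ : [0,1] → [sᵢ(1), ∞]`
(with `sᵢ(0) = ∞`) via pseudo-inverses `g₁, g₂`, we have `S₁ ≤ S₂` iff
`s₁ ∘ s₂⁻¹` is subadditive on `[s₂(1), ∞]`. -/
theorem stmt_0
    (s₁ s₂ : ℝ → ℝ≥0∞) (g₁ g₂ : ℝ≥0∞ → ℝ)
    (hc₁ : ContinuousOn s₁ (Icc 0 1)) (hc₂ : ContinuousOn s₂ (Icc 0 1))
    (ha₁ : StrictAntiOn s₁ (Icc 0 1)) (ha₂ : StrictAntiOn s₂ (Icc 0 1))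
    (h01 : s₁ 0 = ⊤) (h02 : s₂ 0 = ⊤)
    (hsurj₁ : s₁ '' Icc 0 1 = Ici (s₁ 1)) (hsurj₂ : s₂ '' Icc 0 1 = Ici (s₂ 1))
    -- pseudo-inverses: `gᵢ` inverts `sᵢ` on `[sᵢ(1), ∞]` and equals 1 below `sᵢ(1)`
    (hg₁inv : ∀ x ∈ Icc (0:ℝ) 1, g₁ (s₁ x) = x)
    (hg₂inv : ∀ x ∈ Icc (0:ℝ) 1, g₂ (s₂ x) = x)
    (hg₁low : ∀ u, u ≤ s₁ 1 → g₁ u = 1)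
    (hg₂low : ∀ u, u ≤ s₂ 1 → g₂ u = 1)
    (hg₁mem : ∀ u, g₁ u ∈ Icc (0:ℝ) 1) (hg₂mem : ∀ u, g₂ u ∈ Icc (0:ℝ) 1)
    (hg₁r : ∀ u, s₁ 1 ≤ u → s₁ (g₁ u) = u) (hg₂r : ∀ u, s₂ 1 ≤ u → s₂ (g₂ u) = u)
    (S₁ S₂ : ℝ → ℝ → ℝ)
    (hS₁ : ∀ x ∈ Icc (0:ℝ) 1, ∀ y ∈ Icc (0:ℝ) 1,
      S₁ x y = g₁ (min (s₁ x + s₁ y) (s₁ 0)))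
    (hS₂ : ∀ x ∈ Icc (0:ℝ) 1, ∀ y ∈ Icc (0:ℝ) 1,
      S₂ x y = g₂ (min (s₂ x + s₂ y) (s₂ 0))) :
    (∀ x ∈ Icc (0:ℝ) 1, ∀ y ∈ Icc (0:ℝ) 1, S₁ x y ≤ S₂ x y) ↔
      (∀ u v : ℝ≥0∞, s₂ 1 ≤ u → s₂ 1 ≤ v →
        s₁ (g₂ (u + v)) ≤ s₁ (g₂ u) + s₁ (g₂ v)) := by
  have mem11 : (1:ℝ) ∈ Icc (0:ℝ) 1 := by norm_num
  have hmono₁ : ∀ x ∈ Icc (0:ℝ) 1, s₁ 1 ≤ s₁ x := by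
    intro x hx
    rcases eq_or_lt_of_le hx.2 with h | h
    · rw [h]
    · exact (ha₁ hx mem11 h).le
  have hmono₂ : ∀ x ∈ Icc (0:ℝ) 1, s₂ 1 ≤ s₂ x := by
    intro x hx
    rcases eq_or_lt_of_le hx.2 with h | h
    · rw [h]
    · exact (ha₂ hx mem11 h).le
  have g₁anti : ∀ a b : ℝ≥0∞, a ≤ b → g₁ b ≤ g₁ a := by
    intro a b hab
    by_cases hb : b ≤ s₁ 1
    · rw [hg₁low a (hab.trans hb), hg₁low b hb]
    · push_neg at hb
      by_cases ha : a ≤ s₁ 1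
      · rw [hg₁low a ha]; exact (hg₁mem b).2
      · push_neg at ha
        by_contra hlt
        push_neg at hlt
        have h2 := ha₁ (hg₁mem a) (hg₁mem b) hlt
        rw [hg₁r a ha.le, hg₁r b hb.le] at h2
        exact absurd hab (not_le.mpr h2)
  constructor
  · intro h u v hu hv
    have hxm := hg₂mem u
    have hym := hg₂mem v
    have h1 := h (g₂ u) hxm (g₂ v) hym
    rw [hS₁ _ hxm _ hym, hS₂ _ hxm _ hym, h01, h02,
      min_eq_left le_top, min_eq_left le_top, hg₂r u hu, hg₂r v hv] at h1
    have hsum : s₁ 1 ≤ s₁ (g₂ u) + s₁ (g₂ v) :=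
      le_trans (hmono₁ _ hxm) le_self_add
    have h2 : s₁ (g₂ (u + v)) ≤ s₁ (g₁ (s₁ (g₂ u) + s₁ (g₂ v))) :=
      ha₁.antitoneOn (hg₁mem _) (hg₂mem _) h1
    rwa [hg₁r _ hsum] at h2
  · intro h x hx y hy
    rw [hS₁ x hx y hy, hS₂ x hx y hy, h01, h02,
      min_eq_left le_top, min_eq_left le_top]
    have hsub := h (s₂ x) (s₂ y) (hmono₂ x hx) (hmono₂ y hy)
    rw [hg₂inv x hx, hg₂inv y hy] at hsub
    have h3 := g₁anti _ _ hsub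
    rwa [hg₁inv _ (hg₂mem _)] at h3
end

section
/- Let s₁ : [0,1] → [s₁(1), ∞] and s₂ : [0,1] → [s₂(1), ∞] be continuous, strictly decreasing bijections with s₁(0) = s₂(0) = ∞, generating continuous cancellative t-subnorms S₁ and S₂ respectively. Then S₁ = S₂ if and only if there exists a constant c ∈ (0,∞) such that s₁(s₂⁻¹(x)) = c·x for all x ∈ [s₂(1), ∞]. -/
open Set ENNReal

lemma cauchy_nat_mul (f : ℝ≥0∞ → ℝ≥0∞) (a : ℝ≥0∞)
    (hadd : ∀ u v, a ≤ u → a ≤ v → f (u + v) = f u + f v) :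
    ∀ n : ℕ, ∀ u, a ≤ u → f ((n + 1 : ℕ) * u) = (n + 1 : ℕ) * f u := by
  intro n
  induction n with
  | zero => intro u hu; simp
  | succ k ih =>
      intro u hu
      have h2 : a ≤ ((k + 1 : ℕ) : ℝ≥0∞) * u := by
        refine le_trans hu (le_mul_of_one_le_left (zero_le) ?_)
        exact_mod_cast Nat.one_le_iff_ne_zero.mpr (Nat.succ_ne_zero k)
      have h1 : ((k + 1 + 1 : ℕ) : ℝ≥0∞) * u = ((k + 1 : ℕ) : ℝ≥0∞) * u + u := by
        push_cast; ring
      rw [h1, hadd _ u h2 hu, ih u hu]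
      push_cast; ring

lemma cauchy_halfline (f : ℝ≥0∞ → ℝ≥0∞) (a : ℝ≥0∞) (hatop : a < ⊤)
    (hadd : ∀ u v, a ≤ u → a ≤ v → f (u + v) = f u + f v)
    (hmono : ∀ u v, a ≤ u → u < v → f u < f v)
    (hfin : ∀ u, a ≤ u → u < ⊤ → f u < ⊤)
    (htop : f ⊤ = ⊤)
    (hpos : 0 < f (a + 1)) :
    ∃ c : ℝ≥0∞, 0 < c ∧ c < ⊤ ∧ ∀ u, a ≤ u → f u = c * u := by
  set b := a + 1 with hb
  have hab : a ≤ b := le_self_add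
  have hbtop : b ≠ ⊤ := by simp [hb, hatop.ne, ENNReal.add_eq_top]
  have hb0 : b ≠ 0 := by simp [hb]
  have hfb_fin : f b ≠ ⊤ := (hfin b hab hbtop.lt_top).ne
  have hfb_pos : f b ≠ 0 := hpos.ne'
  -- monotone (non-strict)
  have hmono' : ∀ u v, a ≤ u → u ≤ v → f u ≤ f v := by
    intro u v hu huv
    rcases eq_or_lt_of_le huv with rfl | h
    · exact le_rfl
    · exact (hmono u v hu h).le
  -- comparison lemma
  have hcomp : ∀ (m n : ℕ), 1 ≤ m → 1 ≤ n → ∀ u v, a ≤ u → a ≤ v →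
      (m : ℝ≥0∞) * u ≤ (n : ℝ≥0∞) * v → (m : ℝ≥0∞) * f u ≤ (n : ℝ≥0∞) * f v := by
    intro m n hm hn u v hu hv h
    obtain ⟨m', rfl⟩ := Nat.exists_eq_add_of_le hm
    obtain ⟨n', rfl⟩ := Nat.exists_eq_add_of_le hn
    rw [add_comm 1 m', add_comm 1 n'] at *
    have hmu : a ≤ (↑(m' + 1) : ℝ≥0∞) * u := by
      refine le_trans hu (le_mul_of_one_le_left (zero_le) ?_)
      exact_mod_cast Nat.one_le_iff_ne_zero.mpr (Nat.succ_ne_zero m')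
    have := hmono' _ _ hmu h
    rwa [cauchy_nat_mul f a hadd m' u hu, cauchy_nat_mul f a hadd n' v hv] at this
  -- cross lemma : u * f v ≤ v * f u for finite u v
  have hcross : ∀ u v, a ≤ u → a ≤ v → u ≠ ⊤ → v ≠ ⊤ → u * f v ≤ v * f u := by
    intro u v hu hv hut hvt
    by_contra hbad
    push_neg at hbad
    -- v * f u < u * f v
    have hu0 : u ≠ 0 := by
      rintro rfl; simp at hbad
    have hfv_fin : f v ≠ ⊤ := (hfin v hv hvt.lt_top).ne
    have hfu_fin : f u ≠ ⊤ := (hfin u hu hut.lt_top).ne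
    have hfv0 : f v ≠ 0 := by
      rintro h; rw [h] at hbad; simp at hbad
    have hv0 : v ≠ 0 := by
      rintro rfl
      -- then a = 0, f 0 = 0
      have ha0 : a = 0 := le_antisymm hv (zero_le)
      have hf0 : f 0 = 0 := by
        have := hadd 0 0 (by simp [ha0]) (by simp [ha0])
        simp only [add_zero] at this
        nth_rewrite 1 [← add_zero (f 0)] at this
        have hfin0 : f 0 ≠ ⊤ := (hfin 0 (by simp [ha0]) (by simp)).ne
        exact ((ENNReal.add_right_inj hfin0).mp this).symm
      rw [hf0] at hbad
      simp at hbad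
    -- pass to reals
    set U := u.toReal with hU
    set V := v.toReal with hV
    set FU := (f u).toReal with hFU
    set FV := (f v).toReal with hFV
    have hUpos : 0 < U := ENNReal.toReal_pos hu0 hut
    have hVpos : 0 < V := ENNReal.toReal_pos hv0 hvt
    have hFVpos : 0 < FV := ENNReal.toReal_pos hfv0 hfv_fin
    have hbadR : V * FU < U * FV := by
      have h1 : (v * f u).toReal < (u * f v).toReal :=
        ENNReal.toReal_strict_mono (by exact ENNReal.mul_ne_top hut hfv_fin) hbad
      rwa [ENNReal.toReal_mul, ENNReal.toReal_mul] at h1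
    have hdiv : FU / FV < U / V := by
      rw [div_lt_div_iff₀ hFVpos hVpos]
      linarith [hbadR]
    obtain ⟨q, hq1, hq2⟩ := exists_rat_btwn hdiv
    have hqpos : 0 < q := by
      have : (0:ℝ) ≤ FU / FV := div_nonneg ENNReal.toReal_nonneg hFVpos.le
      exact_mod_cast lt_of_le_of_lt this hq1
    set m := q.num.toNat with hm
    set n := q.den with hn
    have hm1 : 1 ≤ m := by
      have : 0 < q.num := Rat.num_pos.mpr hqpos
      omega
    have hn1 : 1 ≤ n := q.pos
    have hqcast : (q : ℝ) = (m : ℝ) / (n : ℝ) := by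
      rw [Rat.cast_def]
      congr 1
      have h0 : 0 < q.num := Rat.num_pos.mpr hqpos
      exact_mod_cast (Int.toNat_of_nonneg h0.le).symm
    have hnposR : (0:ℝ) < n := by exact_mod_cast hn1
    have hmposR : (0:ℝ) < m := by exact_mod_cast hm1
    -- m * V < n * U  from  q < U / V
    have h1 : (m : ℝ) * V < (n : ℝ) * U := by
      rw [hqcast, div_lt_div_iff₀ hnposR hVpos] at hq2
      linarith
    -- n * FU < m * FV  from  FU / FV < q
    have h2 : (n : ℝ) * FU < (m : ℝ) * FV := by
      rw [hqcast, div_lt_div_iff₀ hFVpos hnposR] at hq1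
      linarith
    -- lift h1 to ℝ≥0∞
    have h1' : (m : ℝ≥0∞) * v ≤ (n : ℝ≥0∞) * u := by
      rw [← ENNReal.toReal_le_toReal (by exact ENNReal.mul_ne_top (by simp) hvt)
        (by exact ENNReal.mul_ne_top (by simp) hut)]
      rw [ENNReal.toReal_mul, ENNReal.toReal_mul]
      simp only [ENNReal.toReal_natCast]
      exact h1.le
    have h3 := hcomp m n hm1 hn1 v u hv hu h1'
    -- contradiction with h2
    have h3R : (m : ℝ) * FV ≤ (n : ℝ) * FU := by
      have := ENNReal.toReal_mono (by exact ENNReal.mul_ne_top (by simp) hfu_fin) h3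
      rwa [ENNReal.toReal_mul, ENNReal.toReal_mul, ENNReal.toReal_natCast,
        ENNReal.toReal_natCast] at this
    linarith
  have hcross' : ∀ u v, a ≤ u → a ≤ v → u ≠ ⊤ → v ≠ ⊤ → u * f v = v * f u := by
    intro u v hu hv hut hvt
    exact le_antisymm (hcross u v hu hv hut hvt) (hcross v u hv hu hvt hut)
  refine ⟨f b / b, ENNReal.div_pos hfb_pos hbtop, ENNReal.div_lt_top hfb_fin hb0, ?_⟩
  intro u hu
  rcases eq_or_ne u ⊤ with rfl | hut
  · rw [htop, ENNReal.mul_top]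
    exact (ENNReal.div_pos hfb_pos hbtop).ne'
  · have h := hcross' u b hu hab hut hbtop
    -- u * f b = b * f u  →  f u = (f b / b) * u
    have : f u = u * f b / b := by
      rw [ENNReal.eq_div_iff hb0 hbtop]
      rw [← h]
    rw [this, ENNReal.div_eq_inv_mul, ENNReal.div_eq_inv_mul]
    ring
/-- With generators as in the representation theorem, `S₁ = S₂` iff
`s₁ ∘ s₂⁻¹(x) = c·x` on `[s₂(1), ∞]` for some constant `c ∈ (0, ∞)`. -/
theorem stmt_1
    (s₁ s₂ : ℝ → ℝ≥0∞) (g₁ g₂ : ℝ≥0∞ → ℝ)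
    (hc₁ : ContinuousOn s₁ (Icc 0 1)) (hc₂ : ContinuousOn s₂ (Icc 0 1))
    (ha₁ : StrictAntiOn s₁ (Icc 0 1)) (ha₂ : StrictAntiOn s₂ (Icc 0 1))
    (h01 : s₁ 0 = ⊤) (h02 : s₂ 0 = ⊤)
    (hsurj₁ : s₁ '' Icc 0 1 = Ici (s₁ 1)) (hsurj₂ : s₂ '' Icc 0 1 = Ici (s₂ 1))
    (hg₁inv : ∀ x ∈ Icc (0:ℝ) 1, g₁ (s₁ x) = x)
    (hg₂inv : ∀ x ∈ Icc (0:ℝ) 1, g₂ (s₂ x) = x)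
    (hg₁low : ∀ u, u ≤ s₁ 1 → g₁ u = 1)
    (hg₂low : ∀ u, u ≤ s₂ 1 → g₂ u = 1)
    (hg₁mem : ∀ u, g₁ u ∈ Icc (0:ℝ) 1) (hg₂mem : ∀ u, g₂ u ∈ Icc (0:ℝ) 1)
    (hg₁r : ∀ u, s₁ 1 ≤ u → s₁ (g₁ u) = u) (hg₂r : ∀ u, s₂ 1 ≤ u → s₂ (g₂ u) = u)
    (S₁ S₂ : ℝ → ℝ → ℝ)
    (hS₁ : ∀ x ∈ Icc (0:ℝ) 1, ∀ y ∈ Icc (0:ℝ) 1, S₁ x y = g₁ (s₁ x + s₁ y))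
    (hS₂ : ∀ x ∈ Icc (0:ℝ) 1, ∀ y ∈ Icc (0:ℝ) 1, S₂ x y = g₂ (s₂ x + s₂ y)) :
    (∀ x ∈ Icc (0:ℝ) 1, ∀ y ∈ Icc (0:ℝ) 1, S₁ x y = S₂ x y) ↔
      (∃ c : ℝ≥0∞, 0 < c ∧ c < ⊤ ∧
        ∀ x : ℝ≥0∞, s₂ 1 ≤ x → s₁ (g₂ x) = c * x) := by
  have h0m : (0:ℝ) ∈ Icc (0:ℝ) 1 := by norm_num
  have h1m : (1:ℝ) ∈ Icc (0:ℝ) 1 := by norm_num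
  have hatop : s₂ 1 < ⊤ := by
    have := ha₂ h0m h1m zero_lt_one
    rwa [h02] at this
  have hs₂le : ∀ x ∈ Icc (0:ℝ) 1, s₂ 1 ≤ s₂ x := by
    intro x hx
    rcases eq_or_lt_of_le hx.2 with h | h
    · rw [h]
    · exact (ha₂ hx h1m h).le
  have hs₁le : ∀ x ∈ Icc (0:ℝ) 1, s₁ 1 ≤ s₁ x := by
    intro x hx
    rcases eq_or_lt_of_le hx.2 with h | h
    · rw [h]
    · exact (ha₁ hx h1m h).le
  constructor
  · intro hSS
    refine cauchy_halfline (fun u => s₁ (g₂ u)) (s₂ 1) hatop ?_ ?_ ?_ ?_ ?_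
    · -- additivity
      intro u v hu hv
      have hx := hg₂mem u
      have hy := hg₂mem v
      have hsx : s₂ (g₂ u) = u := hg₂r u hu
      have hsy : s₂ (g₂ v) = v := hg₂r v hv
      have key : g₁ (s₁ (g₂ u) + s₁ (g₂ v)) = g₂ (s₂ (g₂ u) + s₂ (g₂ v)) := by
        have h1 := hS₁ _ hx _ hy
        have h2 := hS₂ _ hx _ hy
        have h3 := hSS _ hx _ hy
        rw [h1, h2] at h3
        exact h3
      rw [hsx, hsy] at key
      have hs1 : s₁ 1 ≤ s₁ (g₂ u) + s₁ (g₂ v) := le_trans (hs₁le _ hx) le_self_add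
      rw [← key, hg₁r _ hs1]
    · -- strict monotonicity
      intro u v hu huv
      have hv : s₂ 1 ≤ v := hu.trans huv.le
      have hx := hg₂mem u
      have hy := hg₂mem v
      have hsx : s₂ (g₂ u) = u := hg₂r u hu
      have hsy : s₂ (g₂ v) = v := hg₂r v hv
      have hyx : g₂ v < g₂ u := by
        rcases lt_trichotomy (g₂ u) (g₂ v) with h | h | h
        · exact absurd (hsy ▸ hsx ▸ ha₂ hx hy h) (not_lt.mpr huv.le)
        · exact absurd (hsy ▸ hsx ▸ congrArg s₂ h) huv.ne
        · exact h
      exact ha₁ hy hx hyx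
    · -- finiteness
      intro u hu hut
      have hx := hg₂mem u
      have h0 : 0 < g₂ u := by
        rcases eq_or_lt_of_le hx.1 with h | h
        · exfalso
          have : s₂ (g₂ u) = u := hg₂r u hu
          rw [← h, h02] at this
          exact hut.ne this.symm
        · exact h
      have := ha₁ h0m hx h0
      rwa [h01] at this
    · -- top
      have hg2top : g₂ ⊤ = 0 := by
        rw [← h02]; exact hg₂inv 0 h0m
      simp only [hg2top, h01]
    · -- positivity at a + 1
      have hu : s₂ 1 ≤ s₂ 1 + 1 := le_self_add
      have hne : s₂ 1 + 1 ≠ s₂ 1 := (ENNReal.lt_add_right hatop.ne one_ne_zero).ne'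
      have hx := hg₂mem (s₂ 1 + 1)
      have hlt : g₂ (s₂ 1 + 1) < 1 := by
        rcases eq_or_lt_of_le hx.2 with h | h
        · exfalso
          have := hg₂r _ hu
          rw [h] at this
          exact hne this.symm
        · exact h
      have := ha₁ hx h1m hlt
      exact lt_of_le_of_lt (zero_le) this
  · rintro ⟨c, hc0, hct, hc⟩ x hx y hy
    rw [hS₁ x hx y hy, hS₂ x hx y hy]
    have e1 : s₁ x = c * s₂ x := by
      have := hc (s₂ x) (hs₂le x hx)
      rwa [hg₂inv x hx] at this
    have e2 : s₁ y = c * s₂ y := by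
      have := hc (s₂ y) (hs₂le y hy)
      rwa [hg₂inv y hy] at this
    have hu : s₂ 1 ≤ s₂ x + s₂ y := le_trans (hs₂le x hx) le_self_add
    have hw := hg₂mem (s₂ x + s₂ y)
    have hsw : s₂ (g₂ (s₂ x + s₂ y)) = s₂ x + s₂ y := hg₂r _ hu
    have key : s₁ x + s₁ y = s₁ (g₂ (s₂ x + s₂ y)) := by
      rw [e1, e2, ← mul_add, hc _ hu]
    rw [key, hg₁inv _ hw]
end

section
/- Let s₁, s₂ : [0,1] → [1, ∞] be continuous, strictly decreasing bijections with s₁(0) = s₂(0) = ∞ and s₁(1) = s₂(1) = 1 (normalized additive generators), generating continuous cancellative proper t-subnorms S₁ and S₂. If s₁ = c·s₂ + b pointwise, where 0 < c ≤ 1 and c + b = 1, then S₁(x,y) ≤ S₂(x,y) for all x,y ∈ [0,1]. -/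
open Set ENNReal

/-- If the normalized generators satisfy `s₁ = c·s₂ + b` with
`0 < c ≤ 1` and `c + b = 1`, then `S₁ ≤ S₂`. -/
theorem stmt_2
    (s₁ s₂ : ℝ → ℝ≥0∞) (g₁ g₂ : ℝ≥0∞ → ℝ)
    (hc₁ : ContinuousOn s₁ (Icc 0 1)) (hc₂ : ContinuousOn s₂ (Icc 0 1))
    (ha₁ : StrictAntiOn s₁ (Icc 0 1)) (ha₂ : StrictAntiOn s₂ (Icc 0 1))
    (h01 : s₁ 0 = ⊤) (h02 : s₂ 0 = ⊤)
    (h11 : s₁ 1 = 1) (h12 : s₂ 1 = 1)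
    (hsurj₁ : s₁ '' Icc 0 1 = Ici 1) (hsurj₂ : s₂ '' Icc 0 1 = Ici 1)
    (hg₁inv : ∀ x ∈ Icc (0:ℝ) 1, g₁ (s₁ x) = x)
    (hg₂inv : ∀ x ∈ Icc (0:ℝ) 1, g₂ (s₂ x) = x)
    (hg₁mem : ∀ u, g₁ u ∈ Icc (0:ℝ) 1) (hg₂mem : ∀ u, g₂ u ∈ Icc (0:ℝ) 1)
    (hg₁r : ∀ u, 1 ≤ u → s₁ (g₁ u) = u) (hg₂r : ∀ u, 1 ≤ u → s₂ (g₂ u) = u)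
    (S₁ S₂ : ℝ → ℝ → ℝ)
    (hS₁ : ∀ x ∈ Icc (0:ℝ) 1, ∀ y ∈ Icc (0:ℝ) 1, S₁ x y = g₁ (s₁ x + s₁ y))
    (hS₂ : ∀ x ∈ Icc (0:ℝ) 1, ∀ y ∈ Icc (0:ℝ) 1, S₂ x y = g₂ (s₂ x + s₂ y))
    (c b : ℝ≥0∞) (hc0 : 0 < c) (hc1 : c ≤ 1) (hcb : c + b = 1)
    (hlin : ∀ x ∈ Icc (0:ℝ) 1, s₁ x = c * s₂ x + b) :
    ∀ x ∈ Icc (0:ℝ) 1, ∀ y ∈ Icc (0:ℝ) 1, S₁ x y ≤ S₂ x y := by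
  intro x hx y hy
  have hs1x : 1 ≤ s₁ x := by
    have : s₁ x ∈ Ici (1:ℝ≥0∞) := hsurj₁ ▸ mem_image_of_mem s₁ hx
    exact this
  have hs1y : 1 ≤ s₁ y := by
    have : s₁ y ∈ Ici (1:ℝ≥0∞) := hsurj₁ ▸ mem_image_of_mem s₁ hy
    exact this
  have hs2x : 1 ≤ s₂ x := by
    have : s₂ x ∈ Ici (1:ℝ≥0∞) := hsurj₂ ▸ mem_image_of_mem s₂ hx
    exact this
  have hs2y : 1 ≤ s₂ y := by
    have : s₂ y ∈ Ici (1:ℝ≥0∞) := hsurj₂ ▸ mem_image_of_mem s₂ hy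
    exact this
  set u₂ := s₂ x + s₂ y with hu₂
  set u₁ := s₁ x + s₁ y with hu₁
  have hu₂1 : 1 ≤ u₂ := le_trans hs2x le_self_add
  have hu₁1 : 1 ≤ u₁ := le_trans hs1x le_self_add
  set z := g₂ u₂ with hz
  have hzmem : z ∈ Icc (0:ℝ) 1 := hg₂mem u₂
  have hs2z : s₂ z = u₂ := hg₂r u₂ hu₂1
  have hs1z : s₁ z = c * u₂ + b := by rw [hlin z hzmem, hs2z]
  have hle : s₁ z ≤ u₁ := by
    rw [hs1z, hu₁, hlin x hx, hlin y hy]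
    calc c * u₂ + b = c * s₂ x + c * s₂ y + b := by rw [hu₂, mul_add]
    _ ≤ c * s₂ x + c * s₂ y + (b + b) := by gcongr; exact le_self_add
    _ = c * s₂ x + b + (c * s₂ y + b) := by ring
  have hkey : g₁ u₁ ≤ z := by
    by_contra h
    push_neg at h
    have := ha₁ hzmem (hg₁mem u₁) h
    rw [hg₁r u₁ hu₁1] at this
    exact absurd hle (not_le_of_gt this)
  rw [hS₁ x hx y hy, hS₂ x hx y hy]
  exact hkey
end

section
/- Let h : [1, ∞] → [1, ∞] be continuous, strictly increasing, and concave, with h(1) = 1 and h(u) ≤ u for all u ∈ [1, ∞]. Then h is subadditive: h(u + v) ≤ h(u) + h(v) for all u, v ∈ [1, ∞]. -/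
open Set ENNReal

/-- Key lemma: concavity implies decreasing increments:
for `1 ≤ a ≤ b` with `b, t` finite, `h (b+t) + h a ≤ h (a+t) + h b`. -/
lemma stmt_5_key
    (h : ℝ≥0∞ → ℝ≥0∞)
    (hconc : ∀ x ∈ Ici (1 : ℝ≥0∞), ∀ y ∈ Ici (1 : ℝ≥0∞), ∀ lam : ℝ≥0∞, lam ≤ 1 →
      lam * h x + (1 - lam) * h y ≤ h (lam * x + (1 - lam) * y))
    (a b t : ℝ≥0∞) (ha : 1 ≤ a) (hab : a ≤ b) (hb : b ≠ ∞) (ht : t ≠ ∞) :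
    h (b + t) + h a ≤ h (a + t) + h b := by
  rcases eq_or_ne t 0 with rfl | ht0
  · simp [add_comm]
  obtain ⟨d, rfl⟩ : ∃ d, b = a + d := ⟨b - a, by rw [add_comm]; exact (tsub_add_cancel_of_le hab).symm⟩
  have hd : d ≠ ∞ := fun hdi => hb (by simp [hdi])
  set D : ℝ≥0∞ := d + t with hD
  have hD0 : D ≠ 0 := by simp [hD, ht0]
  have hDtop : D ≠ ∞ := by simp [hD, hd, ht]
  have hsum : d / D + t / D = 1 := by
    rw [ENNReal.div_add_div_same, ENNReal.div_self hD0 hDtop]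
  have hlam1 : d / D ≤ 1 := by
    rw [← hsum]; exact le_add_right le_rfl
  have hlam2 : t / D ≤ 1 := by
    rw [← hsum]; exact le_add_left le_rfl
  have hsub1 : 1 - d / D = t / D := by
    rw [← hsum]; simp [ENNReal.add_sub_cancel_left (by
      exact ne_top_of_le_ne_top one_ne_top hlam1)]
  have hsub2 : 1 - t / D = d / D := by
    rw [← hsum, add_comm]; simp [ENNReal.add_sub_cancel_left (by
      exact ne_top_of_le_ne_top one_ne_top hlam2)]
  have hdivmul : ∀ x y : ℝ≥0∞, x / D * y = x * y / D := by
    intro x y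
    rw [div_eq_mul_inv, div_eq_mul_inv, mul_right_comm]
  have hcancel : ∀ x : ℝ≥0∞, x * D / D = x := by
    intro x
    rw [mul_div_assoc, ENNReal.div_self hD0 hDtop, mul_one]
  have hmem1 : a + d + t ∈ Ici (1 : ℝ≥0∞) := le_trans ha (by simp [le_add_right, add_assoc, le_self_add])
  have hmem2 : a ∈ Ici (1 : ℝ≥0∞) := ha
  have hid1 : d / D * (a + d + t) + t / D * a = a + d := by
    rw [hdivmul, hdivmul, ENNReal.div_add_div_same]
    have : d * (a + d + t) + t * a = (a + d) * D := by rw [hD]; ring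
    rw [this, hcancel]
  have hid2 : t / D * (a + d + t) + d / D * a = a + t := by
    rw [hdivmul, hdivmul, ENNReal.div_add_div_same]
    have : t * (a + d + t) + d * a = (a + t) * D := by rw [hD]; ring
    rw [this, hcancel]
  have hc1 := hconc _ hmem1 _ hmem2 (d / D) hlam1
  have hc2 := hconc _ hmem1 _ hmem2 (t / D) hlam2
  rw [hsub1, hid1] at hc1
  rw [hsub2, hid2] at hc2
  calc h (a + d + t) + h a
      = (d / D + t / D) * h (a + d + t) + (t / D + d / D) * h a := by
        rw [hsum, add_comm (t/D), hsum, one_mul, one_mul]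
    _ = (d / D * h (a + d + t) + t / D * h a) + (t / D * h (a + d + t) + d / D * h a) := by
        ring
    _ ≤ h (a + d) + h (a + t) := add_le_add hc1 hc2
    _ = h (a + t) + h (a + d) := add_comm _ _

/-- A continuous, strictly increasing, concave function
`h : [1,∞] → [1,∞]` with `h 1 = 1` and `h u ≤ u` is subadditive on `[1,∞]`. -/
theorem stmt_5
    (h : ℝ≥0∞ → ℝ≥0∞)
    (hmaps : MapsTo h (Ici 1) (Ici 1))
    (hcont : ContinuousOn h (Ici 1))
    (hmono : StrictMonoOn h (Ici 1))
    (hconc : ∀ x ∈ Ici (1 : ℝ≥0∞), ∀ y ∈ Ici (1 : ℝ≥0∞), ∀ lam : ℝ≥0∞, lam ≤ 1 →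
      lam * h x + (1 - lam) * h y ≤ h (lam * x + (1 - lam) * y))
    (h1 : h 1 = 1)
    (hle : ∀ u ∈ Ici (1 : ℝ≥0∞), h u ≤ u) :
    ∀ u ∈ Ici (1 : ℝ≥0∞), ∀ v ∈ Ici (1 : ℝ≥0∞), h (u + v) ≤ h u + h v := by
  intro u hu v hv
  rcases eq_or_ne u ∞ with rfl | hutop
  · rw [top_add]; exact le_add_right le_rfl
  rcases eq_or_ne v ∞ with rfl | hvtop
  · rw [add_top]; exact le_add_left le_rfl
  have k1 : h (u + v) + h 1 ≤ h (1 + v) + h u :=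
    stmt_5_key h hconc 1 u v le_rfl hu hutop hvtop
  have k2 : h (v + 1) + h 1 ≤ h (1 + 1) + h v :=
    stmt_5_key h hconc 1 v 1 le_rfl hv hvtop one_ne_top
  have h2 : h (1 + 1) ≤ 1 + 1 := hle _ (Set.mem_Ici.mpr (le_add_right le_rfl))
  have key : h (u + v) + (1 + 1) ≤ (h u + h v) + (1 + 1) := by
    calc h (u + v) + (1 + 1) = (h (u + v) + h 1) + 1 := by rw [h1]; ring
      _ ≤ (h (1 + v) + h u) + 1 := add_le_add_left k1 1
      _ = (h (v + 1) + h 1) + h u := by rw [h1, add_comm (1:ℝ≥0∞) v]; ring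
      _ ≤ (h (1 + 1) + h v) + h u := add_le_add_left k2 _
      _ ≤ ((1 + 1) + h v) + h u := by gcongr
      _ = (h u + h v) + (1 + 1) := by ring
  exact (ENNReal.add_le_add_iff_right (by simp)).mp key
end

section
/- Let h : [a, ∞] → [b, ∞] (with a, b ≥ 0) be a continuous, strictly increasing, convex function. Then h is subadditive on [a, ∞] if and only if h is quasi-homogeneous, i.e., h(t·x) ≤ t·h(x) for all x ∈ [a, ∞] and all t ≥ 1, assuming additionally h(2a) ≤ 2h(a). -/
open Set ENNReal

/-- For a continuous, strictly increasing, convex function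
`h : [a,∞] → [b,∞]` with `h(2a) ≤ 2h(a)`, subadditivity on `[a,∞]` is
equivalent to quasi-homogeneity: `h(t·x) ≤ t·h(x)` for all `x ∈ [a,∞]`, `t ≥ 1`. -/
theorem stmt_9
    (a b : ℝ≥0∞) (h : ℝ≥0∞ → ℝ≥0∞)
    (hmaps : MapsTo h (Ici a) (Ici b))
    (hcont : ContinuousOn h (Ici a))
    (hmono : StrictMonoOn h (Ici a))
    (hconv : ∀ x ∈ Ici a, ∀ y ∈ Ici a, ∀ lam : ℝ≥0∞, lam ≤ 1 →
      h (lam * x + (1 - lam) * y) ≤ lam * h x + (1 - lam) * h y)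
    (h2a : h (2 * a) ≤ 2 * h a) :
    (∀ u ∈ Ici a, ∀ v ∈ Ici a, h (u + v) ≤ h u + h v) ↔
      (∀ x ∈ Ici a, ∀ t : ℝ≥0∞, 1 ≤ t → h (t * x) ≤ t * h x) := by
  constructor
  · intro sub x hx t ht
    -- step 1 : h ((n+1) x) ≤ (n+1) h x
    have hpow : ∀ n : ℕ, h (((n : ℝ≥0∞) + 1) * x) ≤ ((n : ℝ≥0∞) + 1) * h x := by
      intro n
      induction n with
      | zero => simp
      | succ n ih =>
        have hx' : ((n : ℝ≥0∞) + 1) * x ∈ Ici a :=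
          show a ≤ ((n : ℝ≥0∞) + 1) * x from le_trans hx (le_mul_of_one_le_left zero_le (by simp))
        have hsplit : ((↑(n+1) : ℝ≥0∞) + 1) * x = ((n : ℝ≥0∞) + 1) * x + x := by
          push_cast; ring
        rw [hsplit]
        calc h (((n : ℝ≥0∞) + 1) * x + x) ≤ h (((n : ℝ≥0∞) + 1) * x) + h x :=
              sub _ hx' x hx
          _ ≤ ((n : ℝ≥0∞) + 1) * h x + h x := add_le_add_left ih _
          _ = ((↑(n+1) : ℝ≥0∞) + 1) * h x := by push_cast; ring
    rcases eq_or_ne t ∞ with rfl | htT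
    · rcases eq_or_ne (h x) 0 with hhx | hhx
      · rcases eq_or_ne x 0 with rfl | hx0
        · simpa [hhx] using le_refl (0 : ℝ≥0∞)
        · rcases eq_or_ne x ∞ with rfl | hxT
          · simp [hhx]
          · exfalso
            have hxx : x < x + x := ENNReal.lt_add_right hxT hx0
            have hmem : x + x ∈ Ici a := show a ≤ x + x from le_trans hx le_self_add
            have h1 : h x < h (x + x) := hmono hx hmem hxx
            have h2 : h (x + x) ≤ h x + h x := sub x hx x hx
            rw [hhx] at h1 h2
            simpa using lt_of_lt_of_le h1 h2
      · simp [ENNReal.top_mul hhx]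
    · rcases eq_or_ne x ∞ with rfl | hxT
      · have ht0 : t ≠ 0 := (zero_lt_one.trans_le ht).ne'
        rw [ENNReal.mul_top ht0]
        exact le_mul_of_one_le_left zero_le ht
      · -- t finite, x finite
        set r : NNReal := t.toNNReal with hr
        have htr : t = (r : ℝ≥0∞) := (ENNReal.coe_toNNReal htT).symm
        have hr1 : (1 : NNReal) ≤ r := by
          rw [htr] at ht; exact_mod_cast ht
        set n : ℕ := ⌊r⌋₊ with hn
        have hn1 : 1 ≤ n := Nat.le_floor (by exact_mod_cast hr1)
        have hnt : (n : ℝ≥0∞) ≤ t := by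
          rw [htr]; exact_mod_cast Nat.floor_le (zero_le : (0 : NNReal) ≤ r)
        have htn : t ≤ (n : ℝ≥0∞) + 1 := by
          rw [htr]
          have := (Nat.lt_floor_add_one r).le
          exact_mod_cast this
        have hn0 : (n : ℝ≥0∞) ≠ 0 := by exact_mod_cast Nat.one_le_iff_ne_zero.mp hn1
        have hnT : (n : ℝ≥0∞) ≠ ∞ := ENNReal.natCast_ne_top n
        set lam : ℝ≥0∞ := (t - 1) / n with hlam
        have hlam1 : lam ≤ 1 := by
          rw [hlam, ENNReal.div_le_iff hn0 hnT, one_mul]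
          exact tsub_le_iff_right.mpr htn
        have hlamn : lam * n = t - 1 := ENNReal.div_mul_cancel hn0 hnT
        have key : lam * ((n : ℝ≥0∞) + 1) + (1 - lam) = t := by
          rw [mul_add, mul_one, hlamn, add_assoc, add_tsub_cancel_of_le hlam1,
            tsub_add_cancel_of_le ht]
        have hx1 : ((n : ℝ≥0∞) + 1) * x ∈ Ici a :=
          show a ≤ ((n : ℝ≥0∞) + 1) * x from le_trans hx (le_mul_of_one_le_left zero_le (by simp))
        have hc := hconv _ hx1 x hx lam hlam1
        have harg : lam * (((n : ℝ≥0∞) + 1) * x) + (1 - lam) * x = t * x := by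
          rw [← mul_assoc, ← add_mul, key]
        rw [harg] at hc
        calc h (t * x) ≤ lam * h (((n : ℝ≥0∞) + 1) * x) + (1 - lam) * h x := hc
          _ ≤ lam * (((n : ℝ≥0∞) + 1) * h x) + (1 - lam) * h x :=
              add_le_add_left (mul_le_mul_right (hpow n) lam) _
          _ = (lam * ((n : ℝ≥0∞) + 1) + (1 - lam)) * h x := by rw [← mul_assoc, ← add_mul]
          _ = t * h x := by rw [key]
  · intro qh u hu v hv
    rcases eq_or_ne u 0 with rfl | hu0
    · simpa using le_add_self
    rcases eq_or_ne v 0 with rfl | hv0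
    · simpa using le_self_add
    rcases eq_or_ne u ∞ with rfl | huT
    · simp [top_add]
    rcases eq_or_ne v ∞ with rfl | hvT
    · simp [add_top]
    set s : ℝ≥0∞ := u + v with hs
    have hs0 : s ≠ 0 := by simp [hs, hu0, hv0]
    have hsT : s ≠ ∞ := by simp [hs, huT, hvT]
    have hus : 1 ≤ s / u := by
      rw [ENNReal.le_div_iff_mul_le (Or.inl hu0) (Or.inl huT), one_mul]
      exact le_self_add
    have hvs : 1 ≤ s / v := by
      rw [ENNReal.le_div_iff_mul_le (Or.inl hv0) (Or.inl hvT), one_mul]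
      exact le_add_self
    have A := qh u hu (s / u) hus
    have B := qh v hv (s / v) hvs
    rw [ENNReal.div_mul_cancel hu0 huT] at A
    rw [ENNReal.div_mul_cancel hv0 hvT] at B
    have cancel1 : u / s * (s / u) = 1 := by
      rw [div_eq_mul_inv, div_eq_mul_inv,
        show u * s⁻¹ * (s * u⁻¹) = (u * u⁻¹) * (s * s⁻¹) by ring,
        ENNReal.mul_inv_cancel hu0 huT, ENNReal.mul_inv_cancel hs0 hsT, one_mul]
    have cancel2 : v / s * (s / v) = 1 := by
      rw [div_eq_mul_inv, div_eq_mul_inv,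
        show v * s⁻¹ * (s * v⁻¹) = (v * v⁻¹) * (s * s⁻¹) by ring,
        ENNReal.mul_inv_cancel hv0 hvT, ENNReal.mul_inv_cancel hs0 hsT, one_mul]
    calc h s = (u / s) * h s + (v / s) * h s := by
          rw [← add_mul, ENNReal.div_add_div_same, ENNReal.div_self hs0 hsT, one_mul]
      _ ≤ (u / s) * ((s / u) * h u) + (v / s) * ((s / v) * h v) :=
          add_le_add (mul_le_mul_right A _) (mul_le_mul_right B _)
      _ = h u + h v := by rw [← mul_assoc, cancel1, ← mul_assoc, cancel2, one_mul, one_mul]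
end

section
/- Let s₁ : (0,1) → (s₁(1), ∞) and s₂ : (0,1) → (s₂(1), ∞) be continuous, strictly decreasing surjections (additive generators restricted to (0,1) of continuous cancellative t-subnorms S₁, S₂, with sᵢ(0⁺) = ∞). If the ratio x ↦ s₁(x)/s₂(x) is non-decreasing on (0,1), then the function u ↦ s₁(s₂⁻¹(u))/u is non-increasing on (s₂(1), ∞), and consequently s₁ ∘ s₂⁻¹ is subadditive, hence S₁ ≤ S₂. -/
open Set Filter

/-- If the ratio `s₁/s₂` of the additive generators is
non-decreasing on `(0,1)`, then `u ↦ s₁(s₂⁻¹(u))/u` is non-increasing on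
`(s₂(1),∞)`, hence `s₁ ∘ s₂⁻¹` is subadditive and `S₁ ≤ S₂`. -/
theorem stmt_11
    (a₁ a₂ : ℝ) (ha₁ : 0 ≤ a₁) (ha₂ : 0 ≤ a₂)
    (s₁ s₂ : ℝ → ℝ) (g₁ g₂ : ℝ → ℝ)
    (hc₁ : ContinuousOn s₁ (Ioo 0 1)) (hc₂ : ContinuousOn s₂ (Ioo 0 1))
    (hd₁ : StrictAntiOn s₁ (Ioo 0 1)) (hd₂ : StrictAntiOn s₂ (Ioo 0 1))
    (hsurj₁ : s₁ '' Ioo 0 1 = Ioi a₁) (hsurj₂ : s₂ '' Ioo 0 1 = Ioi a₂)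
    (hlim₁ : Tendsto s₁ (nhdsWithin 0 (Ioi 0)) atTop)
    (hlim₂ : Tendsto s₂ (nhdsWithin 0 (Ioi 0)) atTop)
    -- inverses of the generators
    (hg₁inv : ∀ x ∈ Ioo (0:ℝ) 1, g₁ (s₁ x) = x)
    (hg₂inv : ∀ x ∈ Ioo (0:ℝ) 1, g₂ (s₂ x) = x)
    (hg₁mem : ∀ u ∈ Ioi a₁, g₁ u ∈ Ioo (0:ℝ) 1)
    (hg₂mem : ∀ u ∈ Ioi a₂, g₂ u ∈ Ioo (0:ℝ) 1)
    (hg₁r : ∀ u ∈ Ioi a₁, s₁ (g₁ u) = u) (hg₂r : ∀ u ∈ Ioi a₂, s₂ (g₂ u) = u)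
    (S₁ S₂ : ℝ → ℝ → ℝ)
    (hS₁ : ∀ x ∈ Ioo (0:ℝ) 1, ∀ y ∈ Ioo (0:ℝ) 1, S₁ x y = g₁ (s₁ x + s₁ y))
    (hS₂ : ∀ x ∈ Ioo (0:ℝ) 1, ∀ y ∈ Ioo (0:ℝ) 1, S₂ x y = g₂ (s₂ x + s₂ y))
    (hratio : MonotoneOn (fun x => s₁ x / s₂ x) (Ioo 0 1)) :
    AntitoneOn (fun u => s₁ (g₂ u) / u) (Ioi a₂) ∧
    (∀ u ∈ Ioi a₂, ∀ v ∈ Ioi a₂, s₁ (g₂ (u + v)) ≤ s₁ (g₂ u) + s₁ (g₂ v)) ∧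
    (∀ x ∈ Ioo (0:ℝ) 1, ∀ y ∈ Ioo (0:ℝ) 1, S₁ x y ≤ S₂ x y) := by

  have hmem₂ : ∀ x ∈ Ioo (0:ℝ) 1, s₂ x ∈ Ioi a₂ := fun x hx => hsurj₂ ▸ Set.mem_image_of_mem s₂ hx
  have hmem₁ : ∀ x ∈ Ioo (0:ℝ) 1, s₁ x ∈ Ioi a₁ := fun x hx => hsurj₁ ▸ Set.mem_image_of_mem s₁ hx
  have hg₂anti : ∀ u ∈ Ioi a₂, ∀ v ∈ Ioi a₂, u ≤ v → g₂ v ≤ g₂ u := by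
    intro u hu v hv huv
    by_contra h
    push_neg at h
    have := hd₂ (hg₂mem u hu) (hg₂mem v hv) h
    rw [hg₂r u hu, hg₂r v hv] at this
    linarith
  have hg₁anti : ∀ u ∈ Ioi a₁, ∀ v ∈ Ioi a₁, u ≤ v → g₁ v ≤ g₁ u := by
    intro u hu v hv huv
    by_contra h
    push_neg at h
    have := hd₁ (hg₁mem u hu) (hg₁mem v hv) h
    rw [hg₁r u hu, hg₁r v hv] at this
    linarith
  have hphi : AntitoneOn (fun u => s₁ (g₂ u) / u) (Ioi a₂) := by
    intro u hu v hv huv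
    have h1 : s₁ (g₂ v) / s₂ (g₂ v) ≤ s₁ (g₂ u) / s₂ (g₂ u) :=
      hratio (hg₂mem v hv) (hg₂mem u hu) (hg₂anti u hu v hv huv)
    rw [hg₂r u hu, hg₂r v hv] at h1
    exact h1
  have hsub : ∀ u ∈ Ioi a₂, ∀ v ∈ Ioi a₂, s₁ (g₂ (u + v)) ≤ s₁ (g₂ u) + s₁ (g₂ v) := by
    intro u hu v hv
    have hu' : a₂ < u := hu
    have hv' : a₂ < v := hv
    have hu0 : 0 < u := lt_of_le_of_lt ha₂ hu'
    have hv0 : 0 < v := lt_of_le_of_lt ha₂ hv'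
    have huv : u + v ∈ Ioi a₂ := by simp only [mem_Ioi]; linarith
    have h1 : s₁ (g₂ (u + v)) / (u + v) ≤ s₁ (g₂ u) / u := hphi hu huv (by linarith)
    have h2 : s₁ (g₂ (u + v)) / (u + v) ≤ s₁ (g₂ v) / v := hphi hv huv (by linarith)
    have e : s₁ (g₂ (u + v)) = u * (s₁ (g₂ (u + v)) / (u + v)) + v * (s₁ (g₂ (u + v)) / (u + v)) := by
      field_simp
    rw [e]
    have h3 := mul_le_mul_of_nonneg_left h1 hu0.le
    have h4 := mul_le_mul_of_nonneg_left h2 hv0.le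
    have e1 : u * (s₁ (g₂ u) / u) = s₁ (g₂ u) := by field_simp
    have e2 : v * (s₁ (g₂ v) / v) = s₁ (g₂ v) := by field_simp
    rw [e1] at h3
    rw [e2] at h4
    linarith
  refine ⟨hphi, hsub, ?_⟩
  intro x hx y hy
  rw [hS₁ x hx y hy, hS₂ x hx y hy]
  have hsx := hmem₂ x hx
  have hsy := hmem₂ y hy
  have hsx' : a₂ < s₂ x := hsx
  have hsy' : a₂ < s₂ y := hsy
  have hw : s₂ x + s₂ y ∈ Ioi a₂ := by simp only [mem_Ioi]; linarith
  have key : s₁ (g₂ (s₂ x + s₂ y)) ≤ s₁ x + s₁ y := by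
    have h := hsub (s₂ x) hsx (s₂ y) hsy
    rwa [hg₂inv x hx, hg₂inv y hy] at h
  have hmemw : s₁ (g₂ (s₂ x + s₂ y)) ∈ Ioi a₁ := hmem₁ _ (hg₂mem _ hw)
  have hx1 : a₁ < s₁ x := hmem₁ x hx
  have hy1 : a₁ < s₁ y := hmem₁ y hy
  have hsum : s₁ x + s₁ y ∈ Ioi a₁ := by simp only [mem_Ioi]; linarith
  have h := hg₁anti _ hmemw _ hsum key
  rwa [hg₁inv _ (hg₂mem _ hw)] at h
end

section
/- The function ψ : [1, ∞) → [1, ∞) defined by ψ(u) = −u² + 4u − 2 for 1 ≤ u ≤ 2 and ψ(u) = u for u ≥ 2 is a strictly increasing bijection that is subadditive on [1, ∞) (i.e., ψ(u+v) ≤ ψ(u) + ψ(v) for all u, v ≥ 1), yet ψ(u)/u is not non-increasing on [1, ∞). -/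
open Set

noncomputable def psi13 (u : ℝ) : ℝ := if u ≤ 2 then -u ^ 2 + 4 * u - 2 else u

lemma psi13_eq1 (u : ℝ) (h : u ≤ 2) : psi13 u = -u ^ 2 + 4 * u - 2 := if_pos h

lemma psi13_eq2 (u : ℝ) (h : 2 ≤ u) : psi13 u = u := by
  unfold psi13
  rcases eq_or_lt_of_le h with h | h
  · rw [if_pos h.ge]; nlinarith
  · rw [if_neg (not_le.2 h)]

lemma psi13_ge (u : ℝ) (h : 1 ≤ u) : u ≤ psi13 u := by
  unfold psi13
  split_ifs with h2
  · nlinarith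
  · exact le_refl u

lemma psi13_smo : StrictMonoOn psi13 (Ici 1) := by
  intro u hu v hv huv
  simp only [mem_Ici] at hu hv
  unfold psi13
  split_ifs with h1 h2 h2
  · nlinarith
  · push_neg at h2; nlinarith
  · linarith
  · exact huv

/-- `ψ(u) = -u² + 4u - 2` on `[1,2]`, `ψ(u) = u` on `[2,∞)` is a
strictly increasing bijection of `[1,∞)` onto itself which is subadditive, yet
`ψ(u)/u` is not non-increasing on `[1,∞)`. -/
theorem stmt_13 :
    ∃ ψ : ℝ → ℝ,
      (∀ u, 1 ≤ u → u ≤ 2 → ψ u = -u ^ 2 + 4 * u - 2) ∧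
      (∀ u, 2 ≤ u → ψ u = u) ∧
      StrictMonoOn ψ (Ici 1) ∧
      BijOn ψ (Ici 1) (Ici 1) ∧
      (∀ u ∈ Ici (1:ℝ), ∀ v ∈ Ici (1:ℝ), ψ (u + v) ≤ ψ u + ψ v) ∧
      ¬ AntitoneOn (fun u => ψ u / u) (Ici 1) := by
  refine ⟨psi13, fun u h1 h2 => psi13_eq1 u h2, psi13_eq2, psi13_smo, ⟨?_, psi13_smo.injOn, ?_⟩, ?_, ?_⟩
  · intro u hu
    simp only [mem_Ici] at hu ⊢
    exact le_trans hu (psi13_ge u hu)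
  · intro y hy
    simp only [mem_Ici] at hy
    rcases le_or_gt 2 y with h | h
    · exact ⟨y, by simp [mem_Ici]; linarith, psi13_eq2 y h⟩
    · set s := Real.sqrt (2 - y) with hs
      have hs2 : s ^ 2 = 2 - y := Real.sq_sqrt (by linarith)
      have hs1 : s ≤ 1 := by
        rw [show (1:ℝ) = Real.sqrt 1 by simp]
        exact Real.sqrt_le_sqrt (by linarith)
      have hs0 : 0 ≤ s := Real.sqrt_nonneg _
      refine ⟨2 - s, by simp [mem_Ici]; linarith, ?_⟩
      rw [psi13_eq1 _ (by linarith)]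
      nlinarith
  · intro u hu v hv
    simp only [mem_Ici] at hu hv
    rw [psi13_eq2 _ (by linarith)]
    have := psi13_ge u hu
    have := psi13_ge v hv
    linarith
  · intro h
    have h1 : psi13 1 = 1 := by rw [psi13_eq1 1 (by norm_num)]; norm_num
    have h2 : psi13 (3/2) = 7/4 := by rw [psi13_eq1 _ (by norm_num)]; norm_num
    have := h (by simp : (1:ℝ) ∈ Ici (1:ℝ)) (by simp; norm_num : (3/2:ℝ) ∈ Ici (1:ℝ)) (by norm_num)
    simp only [h1, h2] at this
    norm_num at this
end

section
/- Let s : [0,1] → [1, ∞] be a normalized additive generator of a continuous cancellative proper t-subnorm S (continuous strictly decreasing bijection, s(1) = 1, s(0) = ∞), and let T be a strict t-norm given by T(x,y) = φ⁻¹(φ(x)·φ(y)) for a strictly increasing bijection φ : [0,1] → [0,1]. Then S(x,y) ≤ T(x,y) for all x,y ∈ [0,1] if and only if the function g = s ∘ φ⁻¹ : [0,1] → [1,∞] satisfies g(uv) ≤ g(u) + g(v) for all u, v ∈ [0,1]. -/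
open Set ENNReal

/-- For a continuous cancellative proper t-subnorm `S` with
normalized generator `s : [0,1] → [1,∞]` and a strict t-norm
`T(x,y) = φ⁻¹(φ(x)·φ(y))`, one has `S ≤ T` iff `g = s ∘ φ⁻¹` is
submultiplicative-additive: `g(uv) ≤ g(u) + g(v)` for `u, v ∈ [0,1]`. -/
theorem stmt_15
    (s : ℝ → ℝ≥0∞) (sinv : ℝ≥0∞ → ℝ)
    (hcs : ContinuousOn s (Icc 0 1)) (has : StrictAntiOn s (Icc 0 1))
    (hs1 : s 1 = 1) (hs0 : s 0 = ⊤) (hsurj : s '' Icc 0 1 = Ici 1)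
    (hsinv : ∀ x ∈ Icc (0:ℝ) 1, sinv (s x) = x)
    (hsinvmem : ∀ u, sinv u ∈ Icc (0:ℝ) 1)
    (hsinvr : ∀ u, 1 ≤ u → s (sinv u) = u)
    (φ φinv : ℝ → ℝ)
    (hφ : StrictMonoOn φ (Icc 0 1)) (hφbij : BijOn φ (Icc 0 1) (Icc 0 1))
    (hφinv : ∀ x ∈ Icc (0:ℝ) 1, φinv (φ x) = x)
    (hφinvmem : ∀ u ∈ Icc (0:ℝ) 1, φinv u ∈ Icc (0:ℝ) 1)
    (hφinvr : ∀ u ∈ Icc (0:ℝ) 1, φ (φinv u) = u)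
    (S T : ℝ → ℝ → ℝ)
    (hS : ∀ x ∈ Icc (0:ℝ) 1, ∀ y ∈ Icc (0:ℝ) 1, S x y = sinv (s x + s y))
    (hT : ∀ x ∈ Icc (0:ℝ) 1, ∀ y ∈ Icc (0:ℝ) 1, T x y = φinv (φ x * φ y)) :
    (∀ x ∈ Icc (0:ℝ) 1, ∀ y ∈ Icc (0:ℝ) 1, S x y ≤ T x y) ↔
      (∀ u ∈ Icc (0:ℝ) 1, ∀ v ∈ Icc (0:ℝ) 1,
        s (φinv (u * v)) ≤ s (φinv u) + s (φinv v)) := by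

  -- basic facts
  have sge1 : ∀ x ∈ Icc (0:ℝ) 1, 1 ≤ s x := by
    intro x hx
    have : s x ∈ Ici (1:ℝ≥0∞) := hsurj ▸ mem_image_of_mem s hx
    exact this
  have hsum1 : ∀ x ∈ Icc (0:ℝ) 1, ∀ y ∈ Icc (0:ℝ) 1, (1:ℝ≥0∞) ≤ s x + s y := by
    intro x hx y hy
    exact le_trans (sge1 x hx) (le_add_of_nonneg_right zero_le)
  have sinv_anti : ∀ a b : ℝ≥0∞, 1 ≤ a → a ≤ b → sinv b ≤ sinv a := by
    intro a b ha hab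
    by_contra h
    push_neg at h
    have := has (hsinvmem a) (hsinvmem b) h
    rw [hsinvr a ha, hsinvr b (le_trans ha hab)] at this
    exact absurd hab (not_le.mpr this)
  constructor
  · intro hle u hu v hv
    set x := φinv u with hx
    set y := φinv v with hy
    have hxm : x ∈ Icc (0:ℝ) 1 := hφinvmem u hu
    have hym : y ∈ Icc (0:ℝ) 1 := hφinvmem v hv
    have huv : u * v ∈ Icc (0:ℝ) 1 := by
      constructor
      · exact mul_nonneg hu.1 hv.1
      · exact mul_le_one₀ hu.2 hv.1 hv.2
    have hTxy : T x y = φinv (u * v) := by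
      rw [hT x hxm y hym, hφinvr u hu, hφinvr v hv]
    have hSxy : S x y = sinv (s x + s y) := hS x hxm y hym
    have h1 := hle x hxm y hym
    rw [hSxy, hTxy] at h1
    -- apply s to both sides
    have hmem1 : sinv (s x + s y) ∈ Icc (0:ℝ) 1 := hsinvmem _
    have hmem2 : φinv (u * v) ∈ Icc (0:ℝ) 1 := hφinvmem _ huv
    rcases eq_or_lt_of_le h1 with heq | hlt
    · rw [← heq, hsinvr _ (hsum1 x hxm y hym)]
    · have := has hmem1 hmem2 hlt
      rw [hsinvr _ (hsum1 x hxm y hym)] at this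
      exact this.le
  · intro hg x hx y hy
    set u := φ x with hu
    set v := φ y with hv
    have hum : u ∈ Icc (0:ℝ) 1 := hφbij.mapsTo hx
    have hvm : v ∈ Icc (0:ℝ) 1 := hφbij.mapsTo hy
    have huv : u * v ∈ Icc (0:ℝ) 1 := by
      constructor
      · exact mul_nonneg hum.1 hvm.1
      · exact mul_le_one₀ hum.2 hvm.1 hvm.2
    have key := hg u hum v hvm
    rw [hφinv x hx, hφinv y hy] at key
    have hTxy : T x y = φinv (u * v) := hT x hx y hy
    have hTm : φinv (u * v) ∈ Icc (0:ℝ) 1 := hφinvmem _ huv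
    have h2 : sinv (s x + s y) ≤ sinv (s (φinv (u * v))) :=
      sinv_anti _ _ (sge1 _ hTm) key
    rw [hsinv _ hTm] at h2
    rw [hS x hx y hy, hTxy]
    exact h2
end

section
/- Let S : [0,1]² → [0,1] be a continuous cancellative t-subnorm (commutative, associative, non-decreasing, S(x,y) ≤ min(x,y), continuous, cancellative — in particular admitting a continuous strictly decreasing additive generator s with s(0) = ∞, so that all powers x_S^(n) of x ∈ (0,1) are strictly positive). Then there is no nilpotent t-norm T with S(x,y) ≤ T(x,y) for all x,y ∈ [0,1]. -/
open Set

/-- `Spow S x n` is the `(n+1)`-fold power `x_S^{(n+1)}` of `x` under the binary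
operation `S`: `Spow S x 0 = x` and `Spow S x (n+1) = S x (Spow S x n)`. -/
def Spow (S : ℝ → ℝ → ℝ) (x : ℝ) : ℕ → ℝ
  | 0 => x
  | n + 1 => S x (Spow S x n)

/-- For a continuous cancellative t-subnorm `S` (all of whose
powers of points of `(0,1)` are strictly positive), there is no nilpotent
t-norm `T` with `S ≤ T`. -/
theorem stmt_16
    (S : ℝ → ℝ → ℝ)
    (hScomm : ∀ x ∈ Icc (0:ℝ) 1, ∀ y ∈ Icc (0:ℝ) 1, S x y = S y x)
    (hSassoc : ∀ x ∈ Icc (0:ℝ) 1, ∀ y ∈ Icc (0:ℝ) 1, ∀ z ∈ Icc (0:ℝ) 1,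
      S (S x y) z = S x (S y z))
    (hSmono : ∀ y ∈ Icc (0:ℝ) 1, MonotoneOn (fun x => S x y) (Icc 0 1))
    (hSle : ∀ x ∈ Icc (0:ℝ) 1, ∀ y ∈ Icc (0:ℝ) 1, S x y ≤ min x y)
    (hSmem : ∀ x ∈ Icc (0:ℝ) 1, ∀ y ∈ Icc (0:ℝ) 1, S x y ∈ Icc (0:ℝ) 1)
    (hScont : ContinuousOn (fun p : ℝ × ℝ => S p.1 p.2) (Icc 0 1 ×ˢ Icc 0 1))
    (hScanc : ∀ x ∈ Icc (0:ℝ) 1, ∀ y ∈ Icc (0:ℝ) 1, ∀ z ∈ Icc (0:ℝ) 1,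
      0 < x → S x y = S x z → y = z)
    (hSpos : ∀ x ∈ Ioo (0:ℝ) 1, ∀ n : ℕ, 0 < Spow S x n) :
    ¬ ∃ T : ℝ → ℝ → ℝ,
      (∀ x ∈ Icc (0:ℝ) 1, ∀ y ∈ Icc (0:ℝ) 1, T x y = T y x) ∧
      (∀ x ∈ Icc (0:ℝ) 1, ∀ y ∈ Icc (0:ℝ) 1, ∀ z ∈ Icc (0:ℝ) 1,
        T (T x y) z = T x (T y z)) ∧
      (∀ y ∈ Icc (0:ℝ) 1, MonotoneOn (fun x => T x y) (Icc 0 1)) ∧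
      (∀ x ∈ Icc (0:ℝ) 1, T x 1 = x) ∧
      (∀ x ∈ Icc (0:ℝ) 1, ∀ y ∈ Icc (0:ℝ) 1, T x y ∈ Icc (0:ℝ) 1) ∧
      ContinuousOn (fun p : ℝ × ℝ => T p.1 p.2) (Icc 0 1 ×ˢ Icc 0 1) ∧
      (∀ x ∈ Ioo (0:ℝ) 1, ∃ n : ℕ, Spow T x n = 0) ∧
      (∀ x ∈ Icc (0:ℝ) 1, ∀ y ∈ Icc (0:ℝ) 1, S x y ≤ T x y) := by

  rintro ⟨T, hTcomm, hTassoc, hTmono, hT1, hTmem, hTcont, hTnil, hST⟩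
  have hx : (1/2 : ℝ) ∈ Ioo (0:ℝ) 1 := by norm_num
  have hxI : (1/2 : ℝ) ∈ Icc (0:ℝ) 1 := by norm_num
  -- memberships
  have hSpow_mem : ∀ n, Spow S (1/2) n ∈ Icc (0:ℝ) 1 := by
    intro n
    induction n with
    | zero => exact hxI
    | succ n ih => exact hSmem _ hxI _ ih
  have hTpow_mem : ∀ n, Spow T (1/2) n ∈ Icc (0:ℝ) 1 := by
    intro n
    induction n with
    | zero => exact hxI
    | succ n ih => exact hTmem _ hxI _ ih
  have key : ∀ n, Spow S (1/2) n ≤ Spow T (1/2) n := by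
    intro n
    induction n with
    | zero => exact le_refl _
    | succ n ih =>
      have h1 : S (1/2) (Spow S (1/2) n) ≤ T (1/2) (Spow S (1/2) n) :=
        hST _ hxI _ (hSpow_mem n)
      have h2 : T (1/2) (Spow S (1/2) n) ≤ T (1/2) (Spow T (1/2) n) := by
        rw [hTcomm _ hxI _ (hSpow_mem n), hTcomm _ hxI _ (hTpow_mem n)]
        exact hTmono _ hxI (hSpow_mem n) (hTpow_mem n) ih
      exact le_trans h1 h2
  obtain ⟨n, hn⟩ := hTnil _ hx
  have := hSpos _ hx n
  have := key n
  linarith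
end
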